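/- Let h be a nonconstant C² solution of h''(x) − coth(x) h'(x) + sin(2 h(x)) = 0 on (0,∞) and suppose W(x₀) ≥ 1 for some x₀ > 0, where W(x) = (1/2) h'(x)² + sin²(h(x)). Then there exists ε > 0 such that |h'(x)| > ε for all x > x₀; consequently h' has a fixed sign on (x₀,∞), W(x) → ∞ as x → ∞, and h(x) tends monotonically to +∞ or to −∞. -/

import Mathlib

open Real Set Filter Topology

private lemma escape_monoAux {f f' : ℝ → ℝ} {s : Set ℝ} (hs : Convex ℝ s)
    (hf : ∀ x ∈ s, HasDerivAt f (f' x) x) (h0 : ∀ x ∈ interior s, 0 ≤ f' x) :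
    MonotoneOn f s :=
  monotoneOn_of_deriv_nonneg hs (fun x hx => (hf x hx).continuousAt.continuousWithinAt)
    (fun x hx => ((hf x (interior_subset hx)).differentiableAt).differentiableWithinAt)
    (fun x hx => by rw [(hf x (interior_subset hx)).deriv]; exact h0 x hx)

private lemma escape_antiAux {f f' : ℝ → ℝ} {s : Set ℝ} (hs : Convex ℝ s)
    (hf : ∀ x ∈ s, HasDerivAt f (f' x) x) (h0 : ∀ x ∈ interior s, f' x ≤ 0) :
    AntitoneOn f s :=
  antitoneOn_of_deriv_nonpos hs (fun x hx => (hf x hx).continuousAt.continuousWithinAt)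
    (fun x hx => ((hf x (interior_subset hx)).differentiableAt).differentiableWithinAt)
    (fun x hx => by rw [(hf x (interior_subset hx)).deriv]; exact h0 x hx)

private lemma escape_strictMonoAux {f f' : ℝ → ℝ} {s : Set ℝ} (hs : Convex ℝ s)
    (hf : ∀ x ∈ s, HasDerivAt f (f' x) x) (h0 : ∀ x ∈ interior s, 0 < f' x) :
    StrictMonoOn f s :=
  strictMonoOn_of_deriv_pos hs (fun x hx => (hf x hx).continuousAt.continuousWithinAt)
    (fun x hx => by rw [(hf x (interior_subset hx)).deriv]; exact h0 x hx)

private lemma escape_strictAntiAux {f f' : ℝ → ℝ} {s : Set ℝ} (hs : Convex ℝ s)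
    (hf : ∀ x ∈ s, HasDerivAt f (f' x) x) (h0 : ∀ x ∈ interior s, f' x < 0) :
    StrictAntiOn f s :=
  strictAntiOn_of_deriv_neg hs (fun x hx => (hf x hx).continuousAt.continuousWithinAt)
    (fun x hx => by rw [(hf x (interior_subset hx)).deriv]; exact h0 x hx)

set_option maxHeartbeats 1600000 in
/-- The escape criterion following equation (20): if a nonconstant `C²` solution of
`h'' - coth(x) h' + sin(2h) = 0` on `(0,∞)` satisfies `W(x₀) ≥ 1` for some `x₀ > 0`,
where `W = ½ h'² + sin² h`, then `|h'| > ε > 0` beyond `x₀`, `h'` has a fixed sign on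
`(x₀,∞)`, `W → ∞`, and `h` tends monotonically to `+∞` or `-∞`. -/
theorem escape_criterion
    (h h' h'' : ℝ → ℝ)
    (hd1 : ∀ x ∈ Ioi (0:ℝ), HasDerivAt h (h' x) x)
    (hd2 : ∀ x ∈ Ioi (0:ℝ), HasDerivAt h' (h'' x) x)
    (hcont : ContinuousOn h'' (Ioi 0))
    (hode : ∀ x ∈ Ioi (0:ℝ),
      h'' x - (Real.cosh x / Real.sinh x) * h' x + Real.sin (2 * h x) = 0)
    (hnonconst : ¬ ∃ c : ℝ, ∀ x ∈ Ioi (0:ℝ), h x = c)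
    (x₀ : ℝ) (hx₀ : 0 < x₀)
    (hW : 1 ≤ (1 / 2) * h' x₀ ^ 2 + Real.sin (h x₀) ^ 2) :
    (∃ ε > 0, ∀ x > x₀, ε < |h' x|) ∧
    ((∀ x > x₀, 0 < h' x) ∨ (∀ x > x₀, h' x < 0)) ∧
    Filter.Tendsto (fun x => (1 / 2) * h' x ^ 2 + Real.sin (h x) ^ 2)
      Filter.atTop Filter.atTop ∧
    ((StrictMonoOn h (Ioi x₀) ∧ Filter.Tendsto h Filter.atTop Filter.atTop) ∨
      (StrictAntiOn h (Ioi x₀) ∧ Filter.Tendsto h Filter.atTop Filter.atBot)) := by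
  set W : ℝ → ℝ := fun x => (1 / 2) * h' x ^ 2 + Real.sin (h x) ^ 2 with hWdef
  -- sinh and cosh positivity
  have hsinh : ∀ x : ℝ, 0 < x → 0 < Real.sinh x := fun x hx => by positivity
  have hcoth : ∀ x : ℝ, 0 < x → 1 < Real.cosh x / Real.sinh x := by
    intro x hx
    rw [lt_div_iff₀ (hsinh x hx)]
    simpa using Real.sinh_lt_cosh x
  -- derivative of W
  have hWd : ∀ x ∈ Ioi (0:ℝ), HasDerivAt W (Real.cosh x / Real.sinh x * h' x ^ 2) x := by
    intro x hx
    have H : HasDerivAt W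
        ((1 / 2) * ((2:ℕ) * h' x ^ 1 * h'' x) + (2:ℕ) * Real.sin (h x) ^ 1 * (Real.cos (h x) * h' x)) x :=
      (((hd2 x hx).pow 2).const_mul (1 / 2)).add (((hd1 x hx).sin).pow 2)
    convert H using 1
    have h2 : h'' x = Real.cosh x / Real.sinh x * h' x - Real.sin (2 * h x) := by
      linarith [hode x hx]
    rw [h2, Real.sin_two_mul]
    push_cast
    ring
  -- W is monotone on (0, ∞)
  have hWmono : MonotoneOn W (Ioi 0) := by
    apply escape_monoAux (convex_Ioi 0) hWd
    intro x hx
    rw [interior_Ioi] at hx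
    have := (hsinh x hx)
    positivity
  have hW₀ : (1:ℝ) ≤ W x₀ := by rw [hWdef]; exact hW
  clear_value W
  have hx₀m : x₀ ∈ Ioi (0:ℝ) := hx₀
  have hcont' : ContinuousOn h' (Ioi 0) :=
    fun x hx => ((hd2 x hx).continuousAt).continuousWithinAt
  have hconth : ContinuousOn h (Ioi 0) :=
    fun x hx => ((hd1 x hx).continuousAt).continuousWithinAt
  -- Key claim: h' has no zero on [x₀, ∞)
  have hne : ∀ x ∈ Ici x₀, h' x ≠ 0 := by
    by_contra hcon
    push_neg at hcon
    obtain ⟨x₁, hx₁, hz⟩ := hcon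
    have hx₁0 : (0:ℝ) < x₁ := lt_of_lt_of_le hx₀ hx₁
    have hWx₁ : W x₁ ≤ 1 := by
      rw [hWdef]
      simp only [hz]
      simpa using Real.sin_sq_le_one (h x₁)
    -- Step 1 : h' x₀ = 0
    have hz0 : h' x₀ = 0 := by
      by_contra hne0
      have hx₁gt : x₀ < x₁ := lt_of_le_of_ne hx₁ (by rintro rfl; exact hne0 hz)
      have hcA : ContinuousAt h' x₀ := (hd2 x₀ hx₀m).continuousAt
      have hev : ∀ᶠ y in 𝓝 x₀, h' y ≠ 0 := hcA.eventually_ne hne0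
      rw [Metric.eventually_nhds_iff] at hev
      obtain ⟨δ, hδ, hδne⟩ := hev
      set t := x₀ + min (δ / 2) ((x₁ - x₀) / 2) with ht
      have htmin : 0 < min (δ / 2) ((x₁ - x₀) / 2) := by
        apply lt_min <;> linarith
      have ht1 : x₀ < t := by simp only [ht]; linarith
      have ht2 : t ≤ x₁ := by
        have := min_le_right (δ / 2) ((x₁ - x₀) / 2)
        simp only [ht]; linarith
      have hsub : Icc x₀ t ⊆ Ioi (0:ℝ) := fun y hy => lt_of_lt_of_le hx₀ hy.1
      have hWs : StrictMonoOn W (Icc x₀ t) := by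
        apply escape_strictMonoAux (convex_Icc _ _) (fun y hy => hWd y (hsub hy))
        intro y hy
        rw [interior_Icc] at hy
        have hy0 : (0:ℝ) < y := lt_trans hx₀ hy.1
        have hyne : h' y ≠ 0 := by
          apply hδne
          rw [Real.dist_eq, abs_of_nonneg (by linarith [hy.1.le])]
          have := min_le_left (δ / 2) ((x₁ - x₀) / 2)
          have : y < t := hy.2
          simp only [ht] at this ⊢
          linarith [min_le_left (δ / 2) ((x₁ - x₀) / 2)]
        have h1 := hcoth y hy0
        have h2 : 0 < h' y ^ 2 := by positivity
        positivity
      have : W x₀ < W t := hWs (left_mem_Icc.mpr ht1.le) (right_mem_Icc.mpr ht1.le) ht1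
      have : W t ≤ W x₁ := hWmono (lt_of_lt_of_le hx₀ ht1.le) hx₁0 ht2
      linarith [hW₀]
    -- Step 2 : cos (h x₀) = 0
    have hsin1 : Real.sin (h x₀) ^ 2 = 1 := by
      have : W x₀ ≤ 1 := by
        rw [hWdef]
        simp only [hz0]
        simpa using Real.sin_sq_le_one (h x₀)
      have hWeq : W x₀ = 1 := le_antisymm this hW₀
      rw [hWdef] at hWeq
      simp only [hz0] at hWeq
      linarith
    have hcos0 : Real.cos (h x₀) = 0 := by
      have := Real.sin_sq_add_cos_sq (h x₀)
      have : Real.cos (h x₀) ^ 2 = 0 := by linarith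
      exact pow_eq_zero_iff (by norm_num) |>.mp this
    -- Energy function for the uniqueness argument
    set c := h x₀ with hc
    set E : ℝ → ℝ := fun x => h' x ^ 2 + (h x - c) ^ 2 with hE
    have hE0 : E x₀ = 0 := by rw [hE]; simp [hz0, hc]
    have hEnn : ∀ x, 0 ≤ E x := fun x => by rw [hE]; positivity
    clear_value c
    have hEd : ∀ x ∈ Ioi (0:ℝ),
        HasDerivAt E (2 * h' x * h'' x + 2 * (h x - c) * h' x) x := by
      intro x hx
      have H : HasDerivAt E ((2:ℕ) * h' x ^ 1 * h'' x + (2:ℕ) * (h x - c) ^ 1 * h' x) x := by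
        rw [hE]
        exact ((hd2 x hx).pow 2).add (((hd1 x hx).sub_const c).pow 2)
      convert H using 1
      push_cast
      ring
    have hsinb : ∀ y : ℝ, |Real.sin (2 * y)| ≤ 2 * |y - c| := by
      intro y
      have hs2c : Real.sin (2 * c) = 0 := by
        rw [Real.sin_two_mul, hcos0]; ring
      have hlip : |Real.sin (2 * y) - Real.sin (2 * c)| ≤ |2 * y - 2 * c| := by
        rw [Real.sin_sub_sin]
        have h1 := Real.abs_sin_le_abs (x := (2 * y - 2 * c) / 2)
        have h2 := Real.abs_cos_le_one ((2 * y + 2 * c) / 2)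
        have h3 : |2 * Real.sin ((2 * y - 2 * c) / 2) * Real.cos ((2 * y + 2 * c) / 2)|
            = 2 * |Real.sin ((2 * y - 2 * c) / 2)| * |Real.cos ((2 * y + 2 * c) / 2)| := by
          rw [abs_mul, abs_mul, abs_two]
        have h4 : |(2 * y - 2 * c) / 2| = |2 * y - 2 * c| / 2 := by
          rw [abs_div, abs_two]
        nlinarith [abs_nonneg (Real.sin ((2 * y - 2 * c) / 2)), abs_nonneg (2 * y - 2 * c)]
      calc |Real.sin (2 * y)| = |Real.sin (2 * y) - Real.sin (2 * c)| := by rw [hs2c]; ring_nf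
        _ ≤ |2 * y - 2 * c| := hlip
        _ = 2 * |y - c| := by
            rw [show (2:ℝ) * y - 2 * c = 2 * (y - c) by ring, abs_mul, abs_two]
    -- the pointwise bound on E'
    have hEbound : ∀ x ∈ Ioi (0:ℝ),
        |2 * h' x * h'' x + 2 * (h x - c) * h' x
          - 2 * (Real.cosh x / Real.sinh x) * h' x ^ 2| ≤ 3 * E x := by
      intro x hx
      have h2 : h'' x = Real.cosh x / Real.sinh x * h' x - Real.sin (2 * h x) := by
        linarith [hode x hx]
      have key : 2 * h' x * h'' x + 2 * (h x - c) * h' x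
          - 2 * (Real.cosh x / Real.sinh x) * h' x ^ 2
          = -2 * h' x * Real.sin (2 * h x) + 2 * (h x - c) * h' x := by
        rw [h2]; ring
      rw [key]
      have hb := hsinb (h x)
      have hq1 : h' x * Real.sin (2 * h x) ≤ |h' x| * (2 * |h x - c|) := by
        have q := le_abs_self (h' x * Real.sin (2 * h x))
        rw [abs_mul] at q
        exact q.trans (mul_le_mul_of_nonneg_left hb (abs_nonneg _))
      have hq2 : -(|h' x| * (2 * |h x - c|)) ≤ h' x * Real.sin (2 * h x) := by
        have q := neg_abs_le (h' x * Real.sin (2 * h x))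
        rw [abs_mul] at q
        have := mul_le_mul_of_nonneg_left hb (abs_nonneg (h' x))
        linarith
      have hq3 : (h x - c) * h' x ≤ |h x - c| * |h' x| := by
        have q := le_abs_self ((h x - c) * h' x)
        rw [abs_mul] at q
        exact q
      have hq4 : -(|h x - c| * |h' x|) ≤ (h x - c) * h' x := by
        have q := neg_abs_le ((h x - c) * h' x)
        rw [abs_mul] at q
        exact q
      have hprod : |h' x| * |h x - c| ≤ (h' x ^ 2 + (h x - c) ^ 2) / 2 := by
        nlinarith [sq_nonneg (|h' x| - |h x - c|), sq_abs (h' x), sq_abs (h x - c)]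
      have hEeq : E x = h' x ^ 2 + (h x - c) ^ 2 := by rw [hE]
      rw [abs_le, hEeq]
      have hcm : |h x - c| * |h' x| = |h' x| * |h x - c| := mul_comm _ _
      constructor
      · linarith [hq1, hq4, hprod, hcm]
      · linarith [hq2, hq3, hprod, hcm]
    clear_value E
    -- h is constant, contradiction
    apply hnonconst
    refine ⟨c, fun x hx => ?_⟩
    rcases lt_trichotomy x x₀ with hlt | heq | hgt
    · -- backward Gronwall on [x, x₀]
      set G : ℝ → ℝ := fun y => Real.exp (3 * y) * E y with hG
      clear_value G
      have hGd : ∀ y ∈ Icc x x₀, HasDerivAt G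
          (Real.exp (3 * y) * 3 * E y
            + Real.exp (3 * y) * (2 * h' y * h'' y + 2 * (h y - c) * h' y)) y := by
        intro y hy
        have hy0 : y ∈ Ioi (0:ℝ) := lt_of_lt_of_le hx hy.1
        have he : HasDerivAt (fun y => Real.exp (3 * y)) (Real.exp (3 * y) * 3) y := by
          simpa using ((hasDerivAt_id y).const_mul 3).exp
        rw [hG]
        exact he.mul (hEd y hy0)
      have hGmono : MonotoneOn G (Icc x x₀) := by
        apply escape_monoAux (convex_Icc _ _) hGd
        intro y hy
        rw [interior_Icc] at hy
        have hy0 : y ∈ Ioi (0:ℝ) := lt_trans hx hy.1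
        have hb := hEbound y hy0
        have hcp : 0 ≤ 2 * (Real.cosh y / Real.sinh y) * h' y ^ 2 := by
          have h1 := (hsinh y hy0).le
          have h2 := (Real.cosh_pos (x := y)).le
          positivity
        have hlb : -(3 * E y) ≤ 2 * h' y * h'' y + 2 * (h y - c) * h' y
            - 2 * (Real.cosh y / Real.sinh y) * h' y ^ 2 := neg_le_of_abs_le hb
        have hexp : 0 < Real.exp (3 * y) := Real.exp_pos _
        have hkey : 0 ≤ 3 * E y + (2 * h' y * h'' y + 2 * (h y - c) * h' y) := by
          linarith
        have hmul := mul_nonneg hexp.le hkey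
        have hexpand : Real.exp (3 * y) * (3 * E y + (2 * h' y * h'' y + 2 * (h y - c) * h' y))
            = Real.exp (3 * y) * 3 * E y
              + Real.exp (3 * y) * (2 * h' y * h'' y + 2 * (h y - c) * h' y) := by ring
        linarith [hmul, hexpand]
      have h1 : G x ≤ G x₀ := hGmono (left_mem_Icc.mpr hlt.le) (right_mem_Icc.mpr hlt.le) hlt.le
      have h2 : G x₀ = 0 := by rw [hG]; simp [hE0]
      have h3 : 0 ≤ G x := by rw [hG]; exact mul_nonneg (Real.exp_pos _).le (hEnn x)
      have hEx : E x = 0 := by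
        have hGx : G x = 0 := le_antisymm (h2 ▸ h1) h3
        rw [hG] at hGx
        rcases mul_eq_zero.mp hGx with h9 | h9
        · exact absurd h9 (Real.exp_ne_zero _)
        · exact h9
      simp only [hE] at hEx
      nlinarith [sq_nonneg (h' x), sq_nonneg (h x - c)]
    · rw [heq]; exact hc.symm
    · -- forward Gronwall on [x₀, x]
      set M := Real.cosh x / Real.sinh x₀ with hM
      have hM0 : 0 ≤ M := by
        have := (hsinh x₀ hx₀).le
        have := (Real.cosh_pos (x := x)).le
        positivity
      set K := 2 * M + 3 with hK
      have hcothb : ∀ y ∈ Icc x₀ x, Real.cosh y / Real.sinh y ≤ M := by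
        intro y hy
        have hy0 : (0:ℝ) < y := lt_of_lt_of_le hx₀ hy.1
        apply div_le_div₀ (Real.cosh_pos (x := x)).le
        · exact Real.cosh_le_cosh.mpr (by
            rw [abs_of_pos hy0, abs_of_pos (lt_of_lt_of_le hy0 hy.2)]; exact hy.2)
        · exact hsinh x₀ hx₀
        · exact Real.sinh_le_sinh.mpr hy.1
      set G : ℝ → ℝ := fun y => Real.exp (-K * y) * E y with hG
      clear_value G
      have hGd : ∀ y ∈ Icc x₀ x, HasDerivAt G
          (Real.exp (-K * y) * (-K) * E y
            + Real.exp (-K * y) * (2 * h' y * h'' y + 2 * (h y - c) * h' y)) y := by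
        intro y hy
        have hy0 : y ∈ Ioi (0:ℝ) := lt_of_lt_of_le hx₀ hy.1
        have he : HasDerivAt (fun y => Real.exp (-K * y)) (Real.exp (-K * y) * (-K)) y := by
          simpa using ((hasDerivAt_id y).const_mul (-K)).exp
        rw [hG]
        exact he.mul (hEd y hy0)
      have hGanti : AntitoneOn G (Icc x₀ x) := by
        apply escape_antiAux (convex_Icc _ _) hGd
        intro y hy
        rw [interior_Icc] at hy
        have hy0 : y ∈ Ioi (0:ℝ) := lt_trans hx₀ hy.1
        have hb := hEbound y hy0
        have hub : 2 * h' y * h'' y + 2 * (h y - c) * h' y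
            - 2 * (Real.cosh y / Real.sinh y) * h' y ^ 2 ≤ 3 * E y := le_of_abs_le hb
        have hcb := hcothb y ⟨hy.1.le, hy.2.le⟩
        have hcp : 2 * (Real.cosh y / Real.sinh y) * h' y ^ 2 ≤ 2 * M * h' y ^ 2 := by
          nlinarith [sq_nonneg (h' y)]
        have hEy : h' y ^ 2 ≤ E y := by simp only [hE]; nlinarith [sq_nonneg (h y - c)]
        have hexp : 0 < Real.exp (-K * y) := Real.exp_pos _
        have hKE : 2 * h' y * h'' y + 2 * (h y - c) * h' y ≤ K * E y := by
          have h5 : 2 * h' y * h'' y + 2 * (h y - c) * h' y ≤ 3 * E y + 2 * M * h' y ^ 2 := by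
            linarith
          have h6 : 2 * M * h' y ^ 2 ≤ 2 * M * E y := by nlinarith [hEnn y]
          simp only [hK]
          linarith
        have hkey : 0 ≤ K * E y - (2 * h' y * h'' y + 2 * (h y - c) * h' y) := by linarith
        have hmul := mul_nonneg hexp.le hkey
        have hexpand : Real.exp (-K * y) * (K * E y - (2 * h' y * h'' y + 2 * (h y - c) * h' y))
            = -(Real.exp (-K * y) * (-K) * E y
              + Real.exp (-K * y) * (2 * h' y * h'' y + 2 * (h y - c) * h' y)) := by ring
        linarith [hmul, hexpand]
      have h1 : G x ≤ G x₀ := hGanti (left_mem_Icc.mpr hgt.le) (right_mem_Icc.mpr hgt.le) hgt.le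
      have h2 : G x₀ = 0 := by rw [hG]; simp [hE0]
      have h3 : 0 ≤ G x := by rw [hG]; exact mul_nonneg (Real.exp_pos _).le (hEnn x)
      have hEx : E x = 0 := by
        have hGx : G x = 0 := le_antisymm (h2 ▸ h1) h3
        rw [hG] at hGx
        rcases mul_eq_zero.mp hGx with h9 | h9
        · exact absurd h9 (Real.exp_ne_zero _)
        · exact h9
      simp only [hE] at hEx
      nlinarith [sq_nonneg (h' x), sq_nonneg (h x - c)]
  -- sign dichotomy on Ici x₀
  have hsign : (∀ x ∈ Ici x₀, 0 < h' x) ∨ (∀ x ∈ Ici x₀, h' x < 0) := by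
    have hIci : Icc x₀ x₀ ⊆ Ioi (0:ℝ) := fun y hy => lt_of_lt_of_le hx₀ hy.1
    rcases (hne x₀ self_mem_Ici).lt_or_gt with hneg | hpos
    · right
      intro x hx
      by_contra hge
      push_neg at hge
      have hgt : 0 < h' x := lt_of_le_of_ne hge (Ne.symm (hne x hx))
      have hlt : x₀ < x := by
        rcases lt_or_eq_of_le (mem_Ici.mp hx) with h1 | h1
        · exact h1
        · exact absurd (h1 ▸ hgt) (asymm hneg)
      have hcsub : ContinuousOn h' (Icc x₀ x) :=
        hcont'.mono (fun y hy => lt_of_lt_of_le hx₀ hy.1)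
      have := intermediate_value_Icc hlt.le hcsub
      have h0mem : (0:ℝ) ∈ Icc (h' x₀) (h' x) := ⟨hneg.le, hgt.le⟩
      obtain ⟨z, hz, hz0⟩ := this h0mem
      exact hne z (mem_Ici.mpr hz.1) hz0
    · left
      intro x hx
      by_contra hge
      push_neg at hge
      have hgt : h' x < 0 := lt_of_le_of_ne hge (hne x hx)
      have hlt : x₀ < x := by
        rcases lt_or_eq_of_le (mem_Ici.mp hx) with h1 | h1
        · exact h1
        · exact absurd (h1 ▸ hgt) (asymm hpos)
      have hcsub : ContinuousOn h' (Icc x₀ x) :=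
        hcont'.mono (fun y hy => lt_of_lt_of_le hx₀ hy.1)
      have := intermediate_value_Icc' hlt.le hcsub
      have h0mem : (0:ℝ) ∈ Icc (h' x) (h' x₀) := ⟨hgt.le, hpos.le⟩
      obtain ⟨z, hz, hz0⟩ := this h0mem
      exact hne z (mem_Ici.mpr hz.1) hz0
  -- construct ε
  set m := x₀ + 1 with hm
  have hmx₀ : x₀ < m := by simp [hm]
  have hm0 : (0:ℝ) < m := by linarith
  have hsubm : Icc x₀ m ⊆ Ioi (0:ℝ) := fun y hy => lt_of_lt_of_le hx₀ hy.1
  have hsubm' : Icc x₀ m ⊆ Ici x₀ := fun y hy => hy.1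
  obtain ⟨z, hzmem, hzmin⟩ := (isCompact_Icc (a := x₀) (b := m)).exists_isMinOn
    (nonempty_Icc.mpr hmx₀.le) ((continuous_abs.comp_continuousOn (hcont'.mono hsubm)))
  set δ₁ := |h' z| with hδ₁
  have hδ₁pos : 0 < δ₁ := abs_pos.mpr (hne z (hsubm' hzmem))
  -- W m > 1
  have hWsm : StrictMonoOn W (Icc x₀ m) := by
    apply escape_strictMonoAux (convex_Icc _ _) (fun y hy => hWd y (hsubm hy))
    intro y hy
    rw [interior_Icc] at hy
    have hy0 : (0:ℝ) < y := lt_trans hx₀ hy.1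
    have h1 := hcoth y hy0
    have h2 : h' y ≠ 0 := hne y (le_of_lt hy.1)
    have h3 : 0 < h' y ^ 2 := by positivity
    nlinarith
  have hWm : 1 < W m := by
    have := hWsm (left_mem_Icc.mpr hmx₀.le) (right_mem_Icc.mpr hmx₀.le) hmx₀
    linarith [hW]
  set β := W m - 1 with hβ
  have hβpos : 0 < β := by linarith
  set ε := min (δ₁ / 2) (Real.sqrt β) with hε
  have hεpos : 0 < ε := lt_min (by linarith) (Real.sqrt_pos.mpr hβpos)
  have hεbound : ∀ x > x₀, ε < |h' x| := by
    intro x hx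
    rcases le_or_gt x m with hxm | hxm
    · have hmem : x ∈ Icc x₀ m := ⟨hx.le, hxm⟩
      have := hzmin hmem
      calc ε ≤ δ₁ / 2 := min_le_left _ _
        _ < δ₁ := by linarith
        _ ≤ |h' x| := this
    · have hx0 : (0:ℝ) < x := lt_trans hm0 hxm
      have hWx : W m ≤ W x := hWmono hm0 hx0 hxm.le
      have hsq : β < h' x ^ 2 := by
        have hs := Real.sin_sq_le_one (h x)
        have h5 : h' x ≠ 0 := hne x (le_of_lt (lt_trans hmx₀ hxm))
        have h6 : 0 < h' x ^ 2 := by positivity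
        simp only [hWdef] at hWx
        simp only [hβ, hWdef]
        linarith
      have hε2 : ε ^ 2 ≤ β := by
        have h1 : ε ≤ Real.sqrt β := min_le_right _ _
        calc ε ^ 2 ≤ Real.sqrt β ^ 2 := by nlinarith [hεpos.le]
          _ = β := Real.sq_sqrt hβpos.le
      have : ε ^ 2 < |h' x| ^ 2 := by rw [sq_abs]; linarith
      exact lt_of_pow_lt_pow_left₀ 2 (abs_nonneg _) this
  refine ⟨⟨ε, hεpos, hεbound⟩, ?_, ?_, ?_⟩
  · rcases hsign with hp | hn
    · exact Or.inl (fun x hx => hp x hx.le)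
    · exact Or.inr (fun x hx => hn x hx.le)
  · -- W → ∞
    have hmono2 : MonotoneOn (fun x => W x - ε ^ 2 * x) (Ici m) := by
      apply escape_monoAux (convex_Ici m)
        (fun y hy => (hWd y (lt_of_lt_of_le hm0 hy)).sub ((hasDerivAt_id y).const_mul (ε ^ 2)))
      intro y hy
      rw [interior_Ici] at hy
      have hy0 : (0:ℝ) < y := lt_trans hm0 hy
      have h1 := hcoth y hy0
      have h2 : ε < |h' y| := hεbound y (lt_trans hmx₀ hy)
      have h3 : ε ^ 2 < h' y ^ 2 := by
        have := mul_self_lt_mul_self hεpos.le h2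
        nlinarith [this, sq_abs (h' y)]
      have h4 : 0 ≤ h' y ^ 2 := sq_nonneg _
      have : h' y ^ 2 ≤ Real.cosh y / Real.sinh y * h' y ^ 2 := by nlinarith
      simp only [mul_one]
      linarith
    have hlin : Tendsto (fun x : ℝ => (W m - ε ^ 2 * m) + ε ^ 2 * x) atTop atTop := by
      apply tendsto_atTop_add_const_left
      exact (tendsto_id.const_mul_atTop (by positivity : (0:ℝ) < ε ^ 2))
    apply tendsto_atTop_mono' atTop _ hlin
    filter_upwards [eventually_ge_atTop m] with x hx
    have := hmono2 self_mem_Ici hx hx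
    simp only [hWdef] at this ⊢
    linarith
  · -- monotone to ±∞
    rcases hsign with hp | hn
    · left
      constructor
      · apply escape_strictMonoAux (convex_Ioi x₀)
          (fun y hy => hd1 y (lt_trans hx₀ hy))
        intro y hy
        rw [interior_Ioi] at hy
        exact hp y (mem_Ici.mpr (le_of_lt (mem_Ioi.mp hy)))
      · have hmono2 : MonotoneOn (fun x => h x - ε * x) (Ici m) := by
          apply escape_monoAux (convex_Ici m)
            (fun y hy => (hd1 y (lt_of_lt_of_le hm0 hy)).sub ((hasDerivAt_id y).const_mul ε))
          intro y hy
          rw [interior_Ici] at hy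
          have h2 : ε < |h' y| := hεbound y (lt_trans hmx₀ hy)
          rw [abs_of_pos (hp y (le_of_lt (lt_trans hmx₀ hy)))] at h2
          simp only [mul_one]
          linarith
        have hlin : Tendsto (fun x : ℝ => (h m - ε * m) + ε * x) atTop atTop := by
          apply tendsto_atTop_add_const_left
          exact (tendsto_id.const_mul_atTop hεpos)
        apply tendsto_atTop_mono' atTop _ hlin
        filter_upwards [eventually_ge_atTop m] with x hx
        have h7 := hmono2 self_mem_Ici hx hx
        simp only at h7
        linarith
    · right
      constructor
      · apply escape_strictAntiAux (convex_Ioi x₀)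
          (fun y hy => hd1 y (lt_trans hx₀ hy))
        intro y hy
        rw [interior_Ioi] at hy
        exact hn y (mem_Ici.mpr (le_of_lt (mem_Ioi.mp hy)))
      · have hanti2 : AntitoneOn (fun x => h x + ε * x) (Ici m) := by
          apply escape_antiAux (convex_Ici m)
            (fun y hy => (hd1 y (lt_of_lt_of_le hm0 hy)).add ((hasDerivAt_id y).const_mul ε))
          intro y hy
          rw [interior_Ici] at hy
          have h2 : ε < |h' y| := hεbound y (lt_trans hmx₀ hy)
          rw [abs_of_neg (hn y (le_of_lt (lt_trans hmx₀ hy)))] at h2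
          simp only [mul_one]
          linarith
        have hlin : Tendsto (fun x : ℝ => (h m + ε * m) - ε * x) atTop atBot := by
          apply tendsto_atBot_add_const_left
          apply tendsto_neg_atTop_atBot.comp
          exact (tendsto_id.const_mul_atTop hεpos)
        apply tendsto_atBot_mono' atTop _ hlin
        filter_upwards [eventually_ge_atTop m] with x hx
        have h7 := hanti2 self_mem_Ici hx hx
        simp only at h7
        linarith
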